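/- For t ≥ 5 and n = ⌊(3/2)^{t/2}⌋ (so n^t · (2/3)^{C(t,2)} · 3 · e^t · t^{−t} style bound applies), there exists a 3-edge-coloring of K_n such that every set of t vertices induces edges of all three colors; consequently ξ(K_t) ≥ (√(3/2))^t. (Probabilistic proof: a uniformly random 3-coloring avoids any t-set missing a color with positive probability, since C(n,t)·3·(2/3)^{C(t,2)} < 1.) -/

import Mathlib

open Finset Nat

private lemma aux_fact (t : ℕ) (ht : 5 ≤ t) : 9 * 3 ^ t < (t !) ^ 2 * 2 ^ t := by
  induction t, ht using Nat.le_induction with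
  | base => norm_num [Nat.factorial]
  | succ n hn ih =>
    have h3 : 3 ≤ 2 * (n + 1) ^ 2 := by nlinarith
    calc 9 * 3 ^ (n + 1) = 3 * (9 * 3 ^ n) := by ring
    _ < 3 * ((n !) ^ 2 * 2 ^ n) := mul_lt_mul_of_pos_left ih (by norm_num)
    _ ≤ (2 * (n + 1) ^ 2) * ((n !) ^ 2 * 2 ^ n) := Nat.mul_le_mul_right _ h3
    _ = ((n + 1)!) ^ 2 * 2 ^ (n + 1) := by
        rw [Nat.factorial_succ]; ring

private lemma two_mul_choose_two (t : ℕ) : 2 * t.choose 2 = t * t - t := by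
  rw [Nat.choose_two_right]
  have he : 2 ∣ t * (t - 1) := by
    rcases Nat.even_or_odd t with h | h
    · exact Dvd.dvd.mul_right h.two_dvd _
    · rcases t with _ | t
      · simp
      · have : Even ((t + 1) - 1) := by
          simpa using Nat.Odd.sub_odd h odd_one
        exact Dvd.dvd.mul_left this.two_dvd _
  rw [Nat.mul_div_cancel' he]
  cases t with
  | zero => simp
  | succ t => simp only [Nat.succ_sub_one]; ring_nf; omega

private lemma aux_num (t n : ℕ) (ht : 5 ≤ t) (hn : n ^ 2 * 2 ^ t ≤ 3 ^ t) :
    3 * n.choose t * 2 ^ t.choose 2 < 3 ^ t.choose 2 := by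
  have h2q : 2 * t.choose 2 = t * t - t := two_mul_choose_two t
  have htt : t ≤ t * t := Nat.le_mul_of_pos_left t (by omega)
  have key1 : (3 * n ^ t * 2 ^ t.choose 2) ^ 2 * 2 ^ t ≤ 9 * 3 ^ (t * t) := by
    calc (3 * n ^ t * 2 ^ t.choose 2) ^ 2 * 2 ^ t
        = 9 * (n ^ t) ^ 2 * ((2 ^ t.choose 2) ^ 2 * 2 ^ t) := by ring
    _ = 9 * n ^ (2 * t) * (2 ^ (2 * t.choose 2) * 2 ^ t) := by
        rw [← pow_mul, ← pow_mul, mul_comm t 2, mul_comm (t.choose 2) 2]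
    _ = 9 * n ^ (2 * t) * 2 ^ (t * t) := by
        rw [← pow_add]; congr 2; omega
    _ = 9 * ((n ^ 2) ^ t * (2 ^ t) ^ t) := by
        rw [← pow_mul n, ← pow_mul 2, mul_comm 2 t]; ring
    _ = 9 * (n ^ 2 * 2 ^ t) ^ t := by rw [mul_pow]
    _ ≤ 9 * (3 ^ t) ^ t := Nat.mul_le_mul_left 9 (Nat.pow_le_pow_left hn t)
    _ = 9 * 3 ^ (t * t) := by rw [← pow_mul]
  have key2 : 9 * 3 ^ (t * t) < (t ! * 3 ^ t.choose 2) ^ 2 * 2 ^ t := by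
    have e2 : (t ! * 3 ^ t.choose 2) ^ 2 * 2 ^ t
        = ((t !) ^ 2 * 2 ^ t) * 3 ^ (t * t - t) := by
      rw [mul_pow, ← pow_mul 3, mul_comm (t.choose 2) 2, h2q]; ring
    have e3 : 9 * 3 ^ (t * t) = (9 * 3 ^ t) * 3 ^ (t * t - t) := by
      rw [mul_assoc, ← pow_add]; congr 2; omega
    rw [e2, e3]
    exact mul_lt_mul_of_pos_right (aux_fact t ht) (Nat.pow_pos (by norm_num))
  have key3 : 3 * n ^ t * 2 ^ t.choose 2 < t ! * 3 ^ t.choose 2 := by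
    by_contra h
    push_neg at h
    have h1 := Nat.pow_le_pow_left h 2
    have h2 : (t ! * 3 ^ t.choose 2) ^ 2 * 2 ^ t
        ≤ (3 * n ^ t * 2 ^ t.choose 2) ^ 2 * 2 ^ t := Nat.mul_le_mul_right _ h1
    omega
  have hch : t ! * n.choose t ≤ n ^ t := by
    rw [← Nat.descFactorial_eq_factorial_mul_choose]
    exact Nat.descFactorial_le_pow n t
  have key4 : (3 * n.choose t * 2 ^ t.choose 2) * t ! < 3 ^ t.choose 2 * t ! := by
    calc (3 * n.choose t * 2 ^ t.choose 2) * t !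
        = 3 * (t ! * n.choose t) * 2 ^ t.choose 2 := by ring
    _ ≤ 3 * n ^ t * 2 ^ t.choose 2 :=
        Nat.mul_le_mul_right _ (Nat.mul_le_mul_left 3 hch)
    _ < t ! * 3 ^ t.choose 2 := key3
    _ = 3 ^ t.choose 2 * t ! := by ring
  exact Nat.lt_of_mul_lt_mul_right key4

private lemma two_mul_card_lt {α : Type*} [LinearOrder α] (s : Finset α) :
    2 * ((s ×ˢ s).filter fun p => p.1 < p.2).card = s.card * s.card - s.card := by
  classical
  have hswap : ((s ×ˢ s).filter fun p => p.2 < p.1).card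
      = ((s ×ˢ s).filter fun p => p.1 < p.2).card := by
    apply Finset.card_bij (fun p _ => Prod.swap p)
    · intro a ha
      simp only [Finset.mem_filter, Finset.mem_product] at ha ⊢
      exact ⟨⟨ha.1.2, ha.1.1⟩, ha.2⟩
    · intro a _ b _ h
      exact Prod.swap_injective h
    · intro b hb
      refine ⟨b.swap, ?_, by simp⟩
      simp only [Finset.mem_filter, Finset.mem_product] at hb ⊢
      exact ⟨⟨hb.1.2, hb.1.1⟩, hb.2⟩
  have hdisj : Disjoint ((s ×ˢ s).filter fun p => p.1 < p.2)
      ((s ×ˢ s).filter fun p => p.2 < p.1) := by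
    rw [Finset.disjoint_left]
    intro p hp hq
    simp only [Finset.mem_filter] at hp hq
    exact absurd hq.2 (lt_asymm hp.2)
  have hunion : ((s ×ˢ s).filter fun p => p.1 < p.2) ∪ ((s ×ˢ s).filter fun p => p.2 < p.1)
      = s.offDiag := by
    ext p
    simp only [Finset.mem_union, Finset.mem_filter, Finset.mem_product, Finset.mem_offDiag]
    constructor
    · rintro (⟨⟨h1, h2⟩, h3⟩ | ⟨⟨h1, h2⟩, h3⟩)
      · exact ⟨h1, h2, ne_of_lt h3⟩
      · exact ⟨h1, h2, (ne_of_lt h3).symm⟩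
    · rintro ⟨h1, h2, h3⟩
      rcases lt_or_gt_of_ne h3 with h | h
      · exact Or.inl ⟨⟨h1, h2⟩, h⟩
      · exact Or.inr ⟨⟨h1, h2⟩, h⟩
  have hcu := Finset.card_union_of_disjoint hdisj
  rw [hunion, Finset.offDiag_card] at hcu
  omega

private lemma card_pairs {α : Type*} [LinearOrder α] (s : Finset α) :
    ((s ×ˢ s).filter fun p => p.1 < p.2).card = s.card.choose 2 := by
  have h1 := two_mul_card_lt s
  have h2 := two_mul_choose_two s.card
  omega

private abbrev Dom (n : ℕ) := {p : Fin n × Fin n // p.1 < p.2}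

private lemma card_pairs_subtype {n t : ℕ} (S : Finset (Fin n)) (hS : S.card = t) :
    (Finset.univ.filter fun e : Dom n => e.1.1 ∈ S ∧ e.1.2 ∈ S).card = t.choose 2 := by
  rw [← hS, ← card_pairs S]
  apply Finset.card_bij (fun e _ => e.1)
  · intro e he
    simp only [Finset.mem_filter, Finset.mem_univ, true_and] at he
    simp only [Finset.mem_filter, Finset.mem_product]
    exact ⟨⟨he.1, he.2⟩, e.2⟩
  · intro a _ b _ h
    exact Subtype.ext h
  · intro p hp
    simp only [Finset.mem_filter, Finset.mem_product] at hp
    exact ⟨⟨p, hp.2⟩, by simp [hp.1.1, hp.1.2], rfl⟩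

private def badSet (n : ℕ) (S : Finset (Fin n)) (col : Fin 3) : Finset (Dom n → Fin 3) :=
  Finset.univ.filter fun f => ∀ e : Dom n, e.1.1 ∈ S → e.1.2 ∈ S → f e ≠ col

private lemma badSet_card {n t : ℕ} (S : Finset (Fin n)) (hS : S.card = t) (col : Fin 3) :
    (badSet n S col).card = 2 ^ t.choose 2 * 3 ^ (Fintype.card (Dom n) - t.choose 2) := by
  have heq : badSet n S col = Fintype.piFinset (fun e : Dom n =>
      if e.1.1 ∈ S ∧ e.1.2 ∈ S then ({col}ᶜ : Finset (Fin 3)) else Finset.univ) := by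
    ext f
    simp only [badSet, Finset.mem_filter, Finset.mem_univ, true_and, Fintype.mem_piFinset]
    refine forall_congr' fun e => ?_
    split_ifs with h
    · simp [h.1, h.2]
    · simp only [Finset.mem_univ, iff_true]
      intro h1 h2
      exact absurd ⟨h1, h2⟩ h
  rw [heq, Fintype.card_piFinset]
  have hcards : ∀ e : Dom n,
      (if e.1.1 ∈ S ∧ e.1.2 ∈ S then ({col}ᶜ : Finset (Fin 3)) else Finset.univ).card
      = if e.1.1 ∈ S ∧ e.1.2 ∈ S then 2 else 3 := by
    intro e
    split_ifs
    · rw [Finset.card_compl]; simp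
    · simp
  rw [Finset.prod_congr rfl fun e _ => hcards e, Finset.prod_ite _ _,
    Finset.prod_const, Finset.prod_const, card_pairs_subtype S hS]
  congr 1
  congr 1
  have := Finset.card_filter_add_card_filter_not
    (s := (Finset.univ : Finset (Dom n))) (p := fun e : Dom n => e.1.1 ∈ S ∧ e.1.2 ∈ S)
  rw [card_pairs_subtype S hS, Finset.card_univ] at this
  omega

private lemma exists_coloring (n t : ℕ)
    (hlt : 3 * n.choose t * 2 ^ t.choose 2 < 3 ^ t.choose 2) :
    ∃ c : Fin n → Fin n → Fin 3, (∀ i j, c i j = c j i) ∧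
      ∀ S : Finset (Fin n), S.card = t → ∀ col : Fin 3,
        ∃ u ∈ S, ∃ v ∈ S, u ≠ v ∧ c u v = col := by
  by_cases htn : t ≤ n
  swap
  · refine ⟨fun _ _ => 0, fun _ _ => rfl, fun S hS col => absurd ?_ (by omega : ¬ S.card ≤ n)⟩
    calc S.card ≤ (Finset.univ : Finset (Fin n)).card := Finset.card_le_card (Finset.subset_univ S)
    _ = n := by simp
  have hqE : t.choose 2 ≤ Fintype.card (Dom n) := by
    obtain ⟨S₀, -, hS₀⟩ := Finset.exists_subset_card_eq
      (show t ≤ (Finset.univ : Finset (Fin n)).card by simpa using htn)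
    rw [← card_pairs_subtype S₀ hS₀]
    exact le_trans (Finset.card_filter_le _ _) (le_of_eq (Finset.card_univ))
  have hex : ∃ f : Dom n → Fin 3,
      f ∉ ((Finset.powersetCard t Finset.univ) ×ˢ (Finset.univ : Finset (Fin 3))).biUnion
        (fun p => badSet n p.1 p.2) := by
    set I : Finset (Finset (Fin n) × Fin 3) :=
      (Finset.powersetCard t Finset.univ) ×ˢ Finset.univ with hI
    have hBadCard : (I.biUnion (fun p => badSet n p.1 p.2)).card
        < Fintype.card (Dom n → Fin 3) := by
      have h1 : (I.biUnion (fun p => badSet n p.1 p.2)).card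
          ≤ ∑ p ∈ I, (badSet n p.1 p.2).card := Finset.card_biUnion_le
      have h2 : ∑ p ∈ I, (badSet n p.1 p.2).card
          = I.card * (2 ^ t.choose 2 * 3 ^ (Fintype.card (Dom n) - t.choose 2)) := by
        rw [Finset.sum_congr rfl (fun p hp => ?_), Finset.sum_const, smul_eq_mul]
        obtain ⟨hp1, -⟩ := Finset.mem_product.1 hp
        exact badSet_card p.1 (Finset.mem_powersetCard_univ.1 hp1) p.2
      have h3 : I.card = n.choose t * 3 := by
        rw [hI, Finset.card_product, Finset.card_powersetCard]
        simp
      have h4 : Fintype.card (Dom n → Fin 3) = 3 ^ Fintype.card (Dom n) := by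
        rw [Fintype.card_fun]; simp
      have h5 : (I.biUnion (fun p => badSet n p.1 p.2)).card * 3 ^ t.choose 2
          < 3 ^ Fintype.card (Dom n) * 3 ^ t.choose 2 := by
        calc (I.biUnion (fun p => badSet n p.1 p.2)).card * 3 ^ t.choose 2
            ≤ (n.choose t * 3) * (2 ^ t.choose 2 * 3 ^ (Fintype.card (Dom n) - t.choose 2))
              * 3 ^ t.choose 2 := by
              have := h1.trans_eq h2
              rw [h3] at this
              exact Nat.mul_le_mul_right _ this
        _ = (3 * n.choose t * 2 ^ t.choose 2)
              * (3 ^ (Fintype.card (Dom n) - t.choose 2) * 3 ^ t.choose 2) := by ring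
        _ = (3 * n.choose t * 2 ^ t.choose 2) * 3 ^ Fintype.card (Dom n) := by
              rw [← pow_add, Nat.sub_add_cancel hqE]
        _ < 3 ^ t.choose 2 * 3 ^ Fintype.card (Dom n) :=
              mul_lt_mul_of_pos_right hlt (Nat.pow_pos (by norm_num))
        _ = 3 ^ Fintype.card (Dom n) * 3 ^ t.choose 2 := by ring
      rw [h4]
      exact Nat.lt_of_mul_lt_mul_right h5
    by_contra h
    push_neg at h
    have heq : I.biUnion (fun p => badSet n p.1 p.2) = Finset.univ :=
      Finset.eq_univ_of_forall h
    rw [heq, Finset.card_univ] at hBadCard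
    exact lt_irrefl _ hBadCard
  obtain ⟨f, hf⟩ := hex
  have hgood : ∀ S : Finset (Fin n), S.card = t → ∀ col : Fin 3,
      ∃ e : Dom n, e.1.1 ∈ S ∧ e.1.2 ∈ S ∧ f e = col := by
    intro S hS col
    have hnot : f ∉ badSet n S col := by
      intro hmem
      exact hf (Finset.mem_biUnion.2 ⟨(S, col),
        Finset.mem_product.2 ⟨Finset.mem_powersetCard_univ.2 hS, Finset.mem_univ _⟩, hmem⟩)
    simp only [badSet, Finset.mem_filter, Finset.mem_univ, true_and, not_forall] at hnot
    obtain ⟨e, h1, h2, h3⟩ := hnot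
    exact ⟨e, h1, h2, by simpa using h3⟩
  refine ⟨fun i j => if h : i < j then f ⟨(i, j), h⟩ else if h' : j < i then f ⟨(j, i), h'⟩ else 0,
    ?_, ?_⟩
  · intro i j
    dsimp only
    rcases lt_trichotomy i j with h | h | h
    · rw [dif_pos h, dif_neg (lt_asymm h), dif_pos h]
    · subst h; rfl
    · rw [dif_neg (lt_asymm h), dif_pos h, dif_pos h]
  · intro S hS col
    obtain ⟨e, h1, h2, h3⟩ := hgood S hS col
    refine ⟨e.1.1, h1, e.1.2, h2, ne_of_lt e.2, ?_⟩
    dsimp only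
    rw [dif_pos e.2]
    have he : (⟨(e.1.1, e.1.2), e.2⟩ : Dom n) = e := Subtype.ext rfl
    rw [he, h3]

/-- Probabilistic lower bound for cliques: for t ≥ 5 and n = ⌊(√(3/2))^t⌋ there is a
3-edge-coloring of Kₙ in which every set of t vertices induces edges of all three
colors; hence ξ(K_t) ≥ (√(3/2))^t. -/
theorem xi_clique_lower (t : ℕ) (ht : 5 ≤ t) :
    ∃ c : Fin ⌊(Real.sqrt (3 / 2)) ^ t⌋₊ → Fin ⌊(Real.sqrt (3 / 2)) ^ t⌋₊ → Fin 3,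
      (∀ i j, c i j = c j i) ∧
      ∀ S : Finset (Fin ⌊(Real.sqrt (3 / 2)) ^ t⌋₊), S.card = t →
        ∀ col : Fin 3, ∃ u ∈ S, ∃ v ∈ S, u ≠ v ∧ c u v = col := by
  have hn2 : ⌊(Real.sqrt (3 / 2)) ^ t⌋₊ ^ 2 * 2 ^ t ≤ 3 ^ t := by
    set n := ⌊(Real.sqrt (3 / 2)) ^ t⌋₊ with hn
    have h1 : (n : ℝ) ≤ (Real.sqrt (3 / 2)) ^ t := Nat.floor_le (by positivity)
    have h2 : ((n : ℝ)) ^ 2 ≤ ((3 : ℝ) / 2) ^ t := by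
      calc (n : ℝ) ^ 2 ≤ ((Real.sqrt (3 / 2)) ^ t) ^ 2 := by
            apply pow_le_pow_left₀ (by positivity) h1
      _ = ((Real.sqrt (3 / 2)) ^ 2) ^ t := by ring
      _ = ((3 : ℝ) / 2) ^ t := by rw [Real.sq_sqrt (by norm_num)]
    have h3 : ((n ^ 2 * 2 ^ t : ℕ) : ℝ) ≤ ((3 ^ t : ℕ) : ℝ) := by
      push_cast
      calc (n : ℝ) ^ 2 * 2 ^ t ≤ (3 / 2) ^ t * 2 ^ t :=
            mul_le_mul_of_nonneg_right h2 (by positivity)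
      _ = 3 ^ t := by rw [← mul_pow]; norm_num
    exact_mod_cast h3
  exact exists_coloring _ t (aux_num t _ ht hn2)
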